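/- Let κ ∈ Γ_k with κ₁ ≥ ⋯ ≥ κₙ ordered decreasingly and k ≥ 2. Then for indices p with κ_p ≥ κ₁/2 > 0, σ_{k-2}(κ|1p) ≤ C·κ₂⋯κ_k/κ_p for a constant C = C(n,k), and consequently σ_{k-2}(κ|1p) ≤ 2C·κ₁⋯κ_{k-1}/κ₁ ≤ 2C·σ_{k-1}(κ) when κ₁ ≥ 1. -/

import Mathlib

open Polynomial Multiset

noncomputable def esymm (n k : ℕ) (κ : Fin n → ℝ) : ℝ :=
  ∑ s ∈ Finset.powersetCard k (Finset.univ : Finset (Fin n)), ∏ i ∈ s, κ i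

noncomputable def esymm1 (n m : ℕ) (κ : Fin n → ℝ) (i : Fin n) : ℝ :=
  ∑ s ∈ Finset.powersetCard m ((Finset.univ : Finset (Fin n)).erase i), ∏ j ∈ s, κ j

noncomputable def esymm2 (n m : ℕ) (κ : Fin n → ℝ) (i j : Fin n) : ℝ :=
  ∑ s ∈ Finset.powersetCard m (((Finset.univ : Finset (Fin n)).erase i).erase j), ∏ l ∈ s, κ l

def GardingCone (n k : ℕ) : Set (Fin n → ℝ) :=
  {κ | ∀ m, 1 ≤ m → m ≤ k → 0 < esymm n m κ}

noncomputable def auxE (m : ℕ) (M : Multiset ℝ) : ℝ := M.esymm m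

lemma auxE_zero (M : Multiset ℝ) : auxE 0 M = 1 := by
  simp [auxE, Multiset.esymm]

lemma auxE_cons (m : ℕ) (a : ℝ) (M : Multiset ℝ) :
    auxE (m + 1) (a ::ₘ M) = auxE (m + 1) M + a * auxE m M := by
  simp only [auxE, Multiset.esymm, Multiset.powersetCard_cons, Multiset.map_add,
    Multiset.sum_add, Multiset.map_map, Function.comp_def, Multiset.prod_cons]
  rw [← Multiset.sum_map_mul_left]

lemma auxE_one (M : Multiset ℝ) : auxE 1 M = M.sum := by
  simp [auxE, Multiset.esymm, Multiset.powersetCard_one, Multiset.map_map, Function.comp_def]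

lemma auxSum_pos (s : Multiset ℝ) (h : ∀ x ∈ s, 0 < x) (hs : s ≠ 0) : 0 < s.sum := by
  obtain ⟨a, ha⟩ := Multiset.exists_mem_of_ne_zero hs
  obtain ⟨t, rfl⟩ := Multiset.exists_cons_of_mem ha
  rw [Multiset.sum_cons]
  have h1 : 0 < a := h a (Multiset.mem_cons_self _ _)
  have h2 : 0 ≤ t.sum := Multiset.sum_nonneg fun x hx => (h x (Multiset.mem_cons_of_mem hx)).le
  linarith

lemma auxProd_pos (s : Multiset ℝ) (h : ∀ x ∈ s, 0 < x) : 0 < s.prod := by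
  induction s using Multiset.induction with
  | empty => simp
  | cons a t ih =>
    rw [Multiset.prod_cons]
    exact mul_pos (h a (Multiset.mem_cons_self _ _))
      (ih fun x hx => h x (Multiset.mem_cons_of_mem hx))

lemma auxE_pos (m : ℕ) (M : Multiset ℝ) (h : ∀ x ∈ M, 0 < x) (hm : m ≤ Multiset.card M) :
    0 < auxE m M := by
  apply auxSum_pos
  · intro x hx
    obtain ⟨t, ht, rfl⟩ := Multiset.mem_map.1 hx
    exact auxProd_pos _ fun y hy => h y (Multiset.mem_of_le (Multiset.mem_powersetCard.1 ht).1 hy)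
  · intro h0
    rw [Multiset.map_eq_zero] at h0
    have hc := Multiset.card_powersetCard m M
    rw [h0, Multiset.card_zero] at hc
    exact absurd hc.symm (Nat.choose_pos hm).ne'

lemma auxE_eq_zero (m : ℕ) (M : Multiset ℝ) (h : Multiset.card M < m) : auxE m M = 0 := by
  have : (Multiset.card M).choose m = 0 := Nat.choose_eq_zero_of_lt h
  have h2 := Multiset.card_powersetCard m M
  rw [this] at h2
  have : M.powersetCard m = 0 := by
    rwa [Multiset.card_eq_zero] at h2
  simp [auxE, Multiset.esymm, this]

noncomputable def auxP (M : Multiset ℝ) : ℝ[X] := (M.map (fun r => X + C r)).prod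

lemma auxP_monic (M : Multiset ℝ) : (auxP M).Monic := by
  exact Polynomial.monic_multiset_prod_of_monic M _ (fun r _ => Polynomial.monic_X_add_C r)

lemma auxP_natDegree (M : Multiset ℝ) : (auxP M).natDegree = Multiset.card M := by
  rw [auxP, Polynomial.natDegree_multiset_prod_of_monic]
  · rw [Multiset.map_map]
    simp [Function.comp_def, Polynomial.natDegree_X_add_C]
  · intro f hf
    obtain ⟨r, _, rfl⟩ := Multiset.mem_map.1 hf
    exact Polynomial.monic_X_add_C r

lemma auxP_coeff (M : Multiset ℝ) (i : ℕ) (h : i ≤ Multiset.card M) :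
    (auxP M).coeff i = auxE (Multiset.card M - i) M :=
  Multiset.prod_X_add_C_coeff M h

lemma auxP_coeff_hi (M : Multiset ℝ) (i : ℕ) (h : Multiset.card M < i) :
    (auxP M).coeff i = 0 := by
  apply Polynomial.coeff_eq_zero_of_natDegree_lt
  rwa [auxP_natDegree]

lemma auxP_roots (M : Multiset ℝ) : (auxP M).roots = M.map (fun r => -r) := by
  have : auxP M = ((M.map (fun r => -r)).map (fun a => X - C a)).prod := by
    rw [auxP, Multiset.map_map]
    congr 1
    apply Multiset.map_congr rfl
    intro x _
    simp [sub_neg_eq_add]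
  rw [this, Polynomial.roots_multiset_prod_X_sub_C]

lemma auxEvalPos (p : ℝ[X]) (h0 : 0 < p.coeff 0) (h : ∀ i, 0 ≤ p.coeff i) (t : ℝ) (ht : 0 ≤ t) :
    0 < p.eval t := by
  rw [Polynomial.eval_eq_sum_range]
  apply Finset.sum_pos'
  · intro i _
    exact mul_nonneg (h i) (pow_nonneg ht i)
  · exact ⟨0, Finset.mem_range.2 (Nat.succ_pos _), by simpa using h0⟩

def auxGamma (k : ℕ) (M : Multiset ℝ) : Prop := ∀ m, 1 ≤ m → m ≤ k → 0 < auxE m M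

lemma auxGamma_allpos (M : Multiset ℝ) (hM : auxGamma (Multiset.card M) M) :
    ∀ r ∈ M, 0 < r := by
  intro r hr
  by_contra hcon
  push_neg at hcon
  have hcard : 1 ≤ Multiset.card M := Multiset.card_pos.2 (by rintro rfl; simp at hr)
  have hev : (auxP M).eval (-r) = 0 := by
    obtain ⟨t, rfl⟩ := Multiset.exists_cons_of_mem hr
    rw [auxP, Multiset.map_cons, Multiset.prod_cons, Polynomial.eval_mul]
    simp
  have hpos : 0 < (auxP M).eval (-r) := by
    apply auxEvalPos
    · rw [auxP_coeff M 0 (by omega), Nat.sub_zero]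
      exact hM _ hcard le_rfl
    · intro i
      rcases le_or_gt i (Multiset.card M) with hi | hi
      · rw [auxP_coeff M i hi]
        rcases Nat.eq_zero_or_pos (Multiset.card M - i) with h | h
        · rw [h, auxE_zero]; norm_num
        · exact (hM _ h (Nat.sub_le _ _)).le
      · rw [auxP_coeff_hi M i hi]
    · linarith
  linarith

lemma auxDescent (p : ℝ[X]) (hp : Multiset.card p.roots = p.natDegree) :
    ∀ a, a ≤ p.natDegree →
      Multiset.card (derivative^[a] p).roots = (derivative^[a] p).natDegree ∧
      (derivative^[a] p).natDegree = p.natDegree - a := by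
  intro a
  induction a with
  | zero => intro _; simp [hp]
  | succ a ih =>
    intro ha
    obtain ⟨h1, h2⟩ := ih (by omega)
    set q := derivative^[a] p with hq
    have hd1 : Multiset.card q.roots ≤ Multiset.card (derivative q).roots + 1 :=
      Polynomial.card_roots_le_derivative q
    have hd2 : Multiset.card (derivative q).roots ≤ (derivative q).natDegree :=
      Polynomial.card_roots' _
    have hd3 : (derivative q).natDegree ≤ q.natDegree - 1 :=
      Polynomial.natDegree_derivative_le q
    have hqd : 1 ≤ q.natDegree := by omega
    rw [Function.iterate_succ_apply', ← hq]
    constructor <;> omega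

lemma auxNoZeroBoundary (k : ℕ) (hk : 2 ≤ k) (N : Multiset ℝ) (hcard : k ≤ Multiset.card N)
    (hpos : ∀ j, 1 ≤ j → j ≤ k - 2 → 0 < auxE j N) (hz : auxE (k - 1) N = 0)
    (hk0 : 0 < auxE k N) : False := by
  set d := Multiset.card N with hd
  set p := auxP N with hpdef
  have hpd : p.natDegree = d := auxP_natDegree N
  have hproots : Multiset.card p.roots = p.natDegree := by
    rw [auxP_roots, Multiset.card_map, hpd]
  set a := d - k with hadef
  obtain ⟨hq1, hq2⟩ := auxDescent p hproots a (by omega)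
  set q := derivative^[a] p with hqdef
  have hqd : q.natDegree = k := by omega
  -- coefficients of q
  have hcoeff : ∀ i, q.coeff i = ((i + a).descFactorial a : ℝ) * p.coeff (i + a) := by
    intro i
    rw [hqdef, Polynomial.coeff_iterate_derivative, nsmul_eq_mul]
  have hfactpos : ∀ i : ℕ, (0:ℝ) < ((i + a).descFactorial a : ℝ) := by
    intro i
    have : (i + a).descFactorial a ≠ 0 := by
      rw [Ne, Nat.descFactorial_eq_zero_iff_lt]; omega
    exact_mod_cast Nat.pos_of_ne_zero this
  have hc0 : 0 < q.coeff 0 := by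
    rw [hcoeff, auxP_coeff N (0 + a) (by omega)]
    have : d - (0 + a) = k := by omega
    rw [this]
    exact mul_pos (hfactpos 0) hk0
  have hc1 : q.coeff 1 = 0 := by
    rw [hcoeff, auxP_coeff N (1 + a) (by omega)]
    have : d - (1 + a) = k - 1 := by omega
    rw [this, hz, mul_zero]
  have hcnn : ∀ i, 0 ≤ q.coeff i := by
    intro i
    rcases le_or_gt (i + a) d with hi | hi
    · rw [hcoeff, auxP_coeff N (i + a) hi]
      apply mul_nonneg (hfactpos i).le
      rcases Nat.eq_zero_or_pos (d - (i + a)) with h | h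
      · rw [h, auxE_zero]; norm_num
      · rcases Nat.lt_or_ge (d - (i + a)) (k - 1) with h2 | h2
        · exact (hpos _ h (by omega)).le
        · rcases Nat.eq_or_lt_of_le h2 with h3 | h3
          · rw [← h3, hz]
          · have : d - (i + a) = k := by omega
            rw [this]; exact hk0.le
    · rw [hcoeff, auxP_coeff_hi N (i + a) hi, mul_zero]
  -- roots of q are negative
  have hrootsneg : ∀ x ∈ q.roots, 0 < -x := by
    intro x hx
    have hq0 : q ≠ 0 := fun h => by simp [h] at hc0
    have hev : q.eval x = 0 := (Polynomial.mem_roots hq0).1 hx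
    by_contra hcon
    have hxnn : 0 ≤ x := by linarith [not_lt.1 hcon]
    have := auxEvalPos q hc0 hcnn x hxnn
    linarith
  -- q splits
  have hsplit : q = C q.leadingCoeff * (q.roots.map fun r => X - C r).prod := by
    exact (Polynomial.C_leadingCoeff_mul_prod_multiset_X_sub_C hq1).symm
  set s := q.roots.map (fun x => -x) with hsdef
  have hscard : Multiset.card s = k := by rw [hsdef, Multiset.card_map, hq1, hqd]
  have hspos : ∀ x ∈ s, 0 < x := by
    intro x hx
    obtain ⟨y, hy, rfl⟩ := Multiset.mem_map.1 hx
    exact hrootsneg y hy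
  have hprodeq : (q.roots.map fun r => X - C r).prod = auxP s := by
    rw [auxP, hsdef, Multiset.map_map]
    apply congrArg
    apply Multiset.map_congr rfl
    intro x _
    simp [sub_eq_add_neg]
  have hlead : 0 < q.leadingCoeff := by
    rw [Polynomial.leadingCoeff, hqd, hcoeff, auxP_coeff N (k + a) (by omega)]
    have : d - (k + a) = 0 := by omega
    rw [this, auxE_zero, mul_one]
    exact hfactpos k
  have hfinal : q.coeff 1 > 0 := by
    rw [hsplit, Polynomial.coeff_C_mul, hprodeq, auxP_coeff s 1 (by omega), hscard]
    exact mul_pos hlead (auxE_pos _ _ hspos (by omega))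
  rw [hc1] at hfinal
  exact lt_irrefl _ hfinal

lemma auxTaylor (N : Multiset ℝ) (t : ℝ) (m : ℕ) (hm : m ≤ Multiset.card N) :
    auxE m (N.map (· + t)) =
      (Polynomial.hasseDeriv (Multiset.card N - m) (auxP N)).eval t := by
  have hcard : Multiset.card (N.map (· + t)) = Multiset.card N := Multiset.card_map _ _
  have h1 : auxP (N.map (· + t)) = Polynomial.taylor t (auxP N) := by
    rw [Polynomial.taylor_apply, auxP, auxP, Polynomial.multiset_prod_comp,
      Multiset.map_map, Multiset.map_map]
    apply congrArg
    apply Multiset.map_congr rfl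
    intro x _
    simp [Polynomial.add_comp]
    ring
  have h2 := auxP_coeff (N.map (· + t)) (Multiset.card N - m) (by omega)
  rw [hcard] at h2
  have h3 : Multiset.card N - (Multiset.card N - m) = m := by omega
  rw [h3] at h2
  rw [← h2, h1, Polynomial.taylor_coeff]

lemma auxShift (k : ℕ) (M : Multiset ℝ) (hcard : k ≤ Multiset.card M) (hM : auxGamma k M)
    (t : ℝ) (ht : 0 ≤ t) : auxGamma k (M.map (· + t)) := by
  intro m h1 hmk
  set d := Multiset.card M with hd
  rw [auxTaylor M t m (le_trans hmk hcard)]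
  have hdeg : (Polynomial.hasseDeriv (d - m) (auxP M)).natDegree < m + 1 := by
    have := Polynomial.natDegree_hasseDeriv_le (auxP M) (d - m)
    rw [auxP_natDegree] at this
    omega
  rw [Polynomial.eval_eq_sum_range' hdeg]
  apply Finset.sum_pos'
  · intro j hj
    rw [Finset.mem_range] at hj
    apply mul_nonneg _ (pow_nonneg ht j)
    rw [Polynomial.hasseDeriv_coeff]
    apply mul_nonneg (by positivity)
    rw [auxP_coeff M (j + (d - m)) (by omega)]
    have hle : d - (j + (d - m)) ≤ k := by omega
    rcases Nat.eq_zero_or_pos (d - (j + (d - m))) with h | h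
    · rw [h, auxE_zero]; norm_num
    · exact (hM _ h hle).le
  · refine ⟨0, Finset.mem_range.2 (by omega), ?_⟩
    rw [Polynomial.hasseDeriv_coeff, auxP_coeff M (0 + (d - m)) (by omega)]
    have h4 : d - (0 + (d - m)) = m := by omega
    rw [h4]
    have : ((0 + (d - m)).choose (d - m) : ℝ) = 1 := by
      rw [Nat.zero_add, Nat.choose_self]; norm_num
    rw [this, one_mul, pow_zero, mul_one]
    exact hM m h1 hmk

theorem auxRemoval : ∀ (k : ℕ) (M : Multiset ℝ) (a : ℝ), a ∈ M → k ≤ Multiset.card M →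
    auxGamma k M → auxGamma (k - 1) (M.erase a) := by
  intro k
  induction k using Nat.strong_induction_on with
  | _ k IH =>
  intro M a ha hcard hM m h1 hm
  have hk2 : 2 ≤ k := by omega
  by_cases hm2 : m ≤ k - 2
  · exact IH (k - 1) (by omega) M a ha (by omega)
      (fun m' a1 a2 => hM m' a1 (by omega)) m h1 (by omega)
  · have hmk : m = k - 1 := by omega
    subst hmk
    set d := Multiset.card M with hd
    have hcarde : Multiset.card (M.erase a) = d - 1 := by
      rw [Multiset.card_erase_of_mem ha, Nat.pred_eq_sub_one]
    by_cases hdk : d = k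
    · apply auxE_pos
      · intro x hx
        exact auxGamma_allpos M (fun m' a1 a2 => hM m' a1 (by omega)) x
          (Multiset.mem_of_mem_erase hx)
      · omega
    · have hdgt : k < d := by omega
      by_contra hnp
      push_neg at hnp
      have key : ∀ t : ℝ, 0 ≤ t → auxE (k - 1) ((M.erase a).map (· + t)) ≠ 0 := by
        intro t ht h0
        set M' := M.map (· + t) with hM'def
        have hMg' : auxGamma k M' := auxShift k M hcard hM t ht
        have ha' : a + t ∈ M' := Multiset.mem_map_of_mem _ ha
        have herase : M'.erase (a + t) = (M.erase a).map (· + t) :=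
          (Multiset.map_erase _ (fun x y hxy => by simpa using hxy) a M).symm
        have hcard' : Multiset.card (M'.erase (a + t)) = d - 1 := by
          rw [Multiset.card_erase_of_mem ha', hM'def, Multiset.card_map, Nat.pred_eq_sub_one]
        apply auxNoZeroBoundary k hk2 (M'.erase (a + t)) (by omega)
        · intro j hj1 hj2
          exact IH (k - 1) (by omega) M' (a + t) ha'
            (by rw [hM'def, Multiset.card_map]; omega)
            (fun m' a1 a2 => hMg' m' a1 (by omega)) j hj1 (by omega)
        · rw [herase]; exact h0
        · have hcons : M' = (a + t) ::ₘ M'.erase (a + t) := (Multiset.cons_erase ha').symm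
          have hrec : auxE k M' = auxE k (M'.erase (a + t)) + (a + t) * auxE (k - 1) (M'.erase (a + t)) := by
            conv_lhs => rw [hcons]
            have hkk : k = (k - 1) + 1 := by omega
            rw [hkk, auxE_cons]
            norm_num
          have hz' : auxE (k - 1) (M'.erase (a + t)) = 0 := by rw [herase]; exact h0
          have hk' : 0 < auxE k M' := hMg' k (by omega) le_rfl
          rw [hrec, hz', mul_zero, add_zero] at hk'
          exact hk'
      have hzero : (M.erase a).map (· + (0:ℝ)) = M.erase a := by
        simp
      have hlt0 : auxE (k - 1) (M.erase a) < 0 := by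
        rcases lt_or_eq_of_le hnp with h | h
        · exact h
        · exact absurd (by rw [hzero]; exact h) (key 0 le_rfl)
      set N := M.erase a with hN
      set Q := Polynomial.hasseDeriv ((d - 1) - (k - 1)) (auxP N) with hQ
      have hQev : ∀ t : ℝ, Q.eval t = auxE (k - 1) (N.map (· + t)) := by
        intro t
        rw [hQ, ← hcarde]
        exact (auxTaylor N t (k - 1) (by omega)).symm
      set T := 1 + (N.map (fun x => |x|)).sum with hT
      have hsumnn : 0 ≤ (N.map (fun x => |x|)).sum :=
        Multiset.sum_nonneg (by
          intro x hx
          obtain ⟨y, _, rfl⟩ := Multiset.mem_map.1 hx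
          exact abs_nonneg y)
      have hTpos : 0 < T := by rw [hT]; linarith
      have hshiftpos : ∀ x ∈ N.map (· + T), 0 < x := by
        intro x hx
        obtain ⟨y, hy, rfl⟩ := Multiset.mem_map.1 hx
        have h1' : |y| ≤ (N.map (fun x => |x|)).sum :=
          Multiset.single_le_sum (by
            intro z hz
            obtain ⟨w, _, rfl⟩ := Multiset.mem_map.1 hz
            exact abs_nonneg w) _ (Multiset.mem_map_of_mem _ hy)
        have hya := neg_abs_le y
        rw [hT]
        linarith
      have hevT : 0 < Q.eval T := by
        rw [hQev]
        apply auxE_pos _ _ hshiftpos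
        rw [Multiset.card_map]
        omega
      have hev0 : Q.eval 0 < 0 := by
        rw [hQev, hzero]
        exact hlt0
      have hIVT := intermediate_value_Icc hTpos.le (Q.continuous_aeval.continuousOn)
      have hmem : (0:ℝ) ∈ Set.Icc (Q.eval 0) (Q.eval T) := ⟨hev0.le, hevT.le⟩
      obtain ⟨t', ht'mem, ht'val⟩ := hIVT hmem
      exact key t' ht'mem.1 (by rw [← hQev]; exact ht'val)


lemma esymm_eq_auxE (n m : ℕ) (κ : Fin n → ℝ) :
    esymm n m κ = auxE m (Finset.univ.val.map κ) := by
  rw [auxE, Finset.esymm_map_val]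
  rfl

section FinLevel

variable {n k : ℕ} {κ : Fin n → ℝ}

lemma auxBlock (hk : 2 ≤ k) (hkn : k ≤ n) (hΓ : ∀ m, 1 ≤ m → m ≤ k → 0 < esymm n m κ) :
    ∀ j, j ≤ k - 1 →
      auxGamma (k - j) ((Finset.univ.filter (fun i : Fin n => j ≤ (i : ℕ))).val.map κ) ∧
      (Finset.univ.filter (fun i : Fin n => j ≤ (i : ℕ))).card = n - j := by
  intro j
  induction j with
  | zero =>
    intro _
    have huniv : Finset.univ.filter (fun i : Fin n => 0 ≤ (i : ℕ)) = Finset.univ :=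
      Finset.filter_true_of_mem (fun i _ => Nat.zero_le _)
    rw [huniv]
    refine ⟨?_, by simp⟩
    intro m h1 h2
    rw [← esymm_eq_auxE]
    exact hΓ m h1 (by omega)
  | succ j ihj =>
    intro hj1
    obtain ⟨ihG, ihc⟩ := ihj (by omega)
    have hjn : j < n := by omega
    have hsplit : (Finset.univ.filter (fun i : Fin n => j ≤ (i : ℕ))) =
        insert ⟨j, hjn⟩ (Finset.univ.filter (fun i : Fin n => j + 1 ≤ (i : ℕ))) := by
      ext i
      simp only [Finset.mem_filter, Finset.mem_insert, Finset.mem_univ, true_and]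
      constructor
      · intro h
        rcases Nat.eq_or_lt_of_le h with h' | h'
        · left; exact Fin.ext h'.symm
        · right; omega
      · rintro (rfl | h)
        · simp
        · omega
    have hnotmem : (⟨j, hjn⟩ : Fin n) ∉ Finset.univ.filter (fun i : Fin n => j + 1 ≤ (i : ℕ)) := by
      simp
    have hcard1 : (Finset.univ.filter (fun i : Fin n => j + 1 ≤ (i : ℕ))).card = n - (j + 1) := by
      have hc := congrArg Finset.card hsplit
      rw [Finset.card_insert_of_notMem hnotmem, ihc] at hc
      omega
    refine ⟨?_, hcard1⟩
    have hconsm : (Finset.univ.filter (fun i : Fin n => j ≤ (i : ℕ))).val.map κ =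
        κ ⟨j, hjn⟩ ::ₘ (Finset.univ.filter (fun i : Fin n => j + 1 ≤ (i : ℕ))).val.map κ := by
      rw [hsplit, Finset.insert_val_of_notMem hnotmem, Multiset.map_cons]
    have hcardm : Multiset.card ((Finset.univ.filter (fun i : Fin n => j ≤ (i : ℕ))).val.map κ)
        = n - j := by
      rw [Multiset.card_map]
      exact ihc
    have hrem := auxRemoval (k - j)
      ((Finset.univ.filter (fun i : Fin n => j ≤ (i : ℕ))).val.map κ)
      (κ ⟨j, hjn⟩) (by rw [hconsm]; exact Multiset.mem_cons_self _ _)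
      (by rw [hcardm]; omega) ihG
    rw [hconsm, Multiset.erase_cons_head] at hrem
    have hideq : k - j - 1 = k - (j + 1) := by omega
    rw [hideq] at hrem
    exact hrem

lemma auxP1 (hk : 2 ≤ k) (hkn : k ≤ n) (hΓ : ∀ m, 1 ≤ m → m ≤ k → 0 < esymm n m κ)
    (hanti : Antitone κ) : ∀ i : Fin n, (i : ℕ) ≤ k - 1 → 0 < κ i := by
  have hKn : k - 1 < n := by omega
  set K : Fin n := ⟨k - 1, hKn⟩ with hKdef
  set F := Finset.univ.filter (fun i : Fin n => k - 1 ≤ (i : ℕ)) with hF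
  obtain ⟨hG, hcardF⟩ := auxBlock hk hkn hΓ (k - 1) le_rfl
  have hsum : 0 < ∑ i ∈ F, κ i := by
    have := hG 1 le_rfl (by omega)
    rwa [auxE_one] at this
  have hKF : K ∈ F := by simp [hF, hKdef]; omega
  have hcardpos : 0 < F.card := Finset.card_pos.2 ⟨K, hKF⟩
  have hle : ∀ i ∈ F, κ i ≤ κ K := by
    intro i hi
    apply hanti
    rw [Fin.le_def]
    simp only [hF, Finset.mem_filter] at hi
    exact hi.2
  have hsumle : ∑ i ∈ F, κ i ≤ F.card • κ K := Finset.sum_le_card_nsmul F κ (κ K) hle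
  rw [nsmul_eq_mul] at hsumle
  have hKpos : 0 < κ K := by
    by_contra hcon
    push_neg at hcon
    have : (F.card : ℝ) * κ K ≤ 0 :=
      mul_nonpos_iff.2 (Or.inl ⟨by positivity, hcon⟩)
    linarith
  intro i hi
  calc 0 < κ K := hKpos
    _ ≤ κ i := hanti (by rw [Fin.le_def]; exact hi)

lemma auxP2 (hk : 2 ≤ k) (hkn : k ≤ n) (hΓ : ∀ m, 1 ≤ m → m ≤ k → 0 < esymm n m κ)
    (hanti : Antitone κ) :
    ∀ i : Fin n, k - 1 ≤ (i : ℕ) → |κ i| ≤ (n : ℝ) * κ ⟨k - 1, by omega⟩ := by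
  have hKn : k - 1 < n := by omega
  set K : Fin n := ⟨k - 1, hKn⟩ with hKdef
  set F := Finset.univ.filter (fun i : Fin n => k - 1 ≤ (i : ℕ)) with hF
  obtain ⟨hG, hcardF⟩ := auxBlock hk hkn hΓ (k - 1) le_rfl
  have hsum : 0 < ∑ i ∈ F, κ i := by
    have := hG 1 le_rfl (by omega)
    rwa [auxE_one] at this
  have hKpos : 0 < κ K := auxP1 hk hkn hΓ hanti K (by simp [hKdef])
  intro i hi
  have hiF : i ∈ F := by simp [hF]; omega
  have hle : ∀ j ∈ F.erase i, κ j ≤ κ K := by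
    intro j hj
    apply hanti
    rw [Fin.le_def]
    have := (Finset.mem_erase.1 hj).2
    simp only [hF, Finset.mem_filter] at this
    exact this.2
  have herle : ∑ j ∈ F.erase i, κ j ≤ (F.erase i).card • κ K :=
    Finset.sum_le_card_nsmul _ κ (κ K) hle
  rw [nsmul_eq_mul] at herle
  have hcardle : ((F.erase i).card : ℝ) ≤ (n : ℝ) := by
    have h1 : (F.erase i).card ≤ n := le_trans (Finset.card_le_univ _) (by simp)
    exact_mod_cast h1
  have herle2 : ∑ j ∈ F.erase i, κ j ≤ (n : ℝ) * κ K :=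
    le_trans herle (mul_le_mul_of_nonneg_right hcardle hKpos.le)
  have hsplit : ∑ j ∈ F.erase i, κ j + κ i = ∑ j ∈ F, κ j := Finset.sum_erase_add F κ hiF
  have hup : κ i ≤ κ K := hanti (by rw [Fin.le_def]; exact hi)
  have hn1 : (1 : ℝ) ≤ (n : ℝ) := by
    have : 1 ≤ n := by omega
    exact_mod_cast this
  rw [abs_le]
  constructor
  · nlinarith
  · nlinarith

lemma auxProdLB (hk : 2 ≤ k) (hkn : k ≤ n) (hΓ : ∀ m, 1 ≤ m → m ≤ k → 0 < esymm n m κ)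
    (hanti : Antitone κ) :
    (∏ i ∈ Finset.univ.filter (fun i : Fin n => (i : ℕ) < k - 1), κ i) ≤ esymm n (k - 1) κ := by
  have claim : ∀ j, j ≤ k - 1 →
      (∏ i ∈ Finset.univ.filter (fun i : Fin n => (i : ℕ) < j), κ i) *
        auxE (k - 1 - j) ((Finset.univ.filter (fun i : Fin n => j ≤ (i : ℕ))).val.map κ)
      ≤ auxE (k - 1) ((Finset.univ.filter (fun i : Fin n => 0 ≤ (i : ℕ))).val.map κ) := by
    intro j
    induction j with
    | zero =>
      intro _
      have hempty : Finset.univ.filter (fun i : Fin n => (i : ℕ) < 0) = ∅ :=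
        Finset.filter_false_of_mem (fun i _ => by omega)
      rw [hempty, Finset.prod_empty, one_mul, Nat.sub_zero]
    | succ j ihj =>
      intro hj1
      have hih := ihj (by omega)
      have hjn : j < n := by omega
      have hsplit : (Finset.univ.filter (fun i : Fin n => j ≤ (i : ℕ))) =
          insert ⟨j, hjn⟩ (Finset.univ.filter (fun i : Fin n => j + 1 ≤ (i : ℕ))) := by
        ext i
        simp only [Finset.mem_filter, Finset.mem_insert, Finset.mem_univ, true_and]
        constructor
        · intro h
          rcases Nat.eq_or_lt_of_le h with h' | h'
          · left; exact Fin.ext h'.symm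
          · right; omega
        · rintro (rfl | h)
          · simp
          · omega
      have hnotmem : (⟨j, hjn⟩ : Fin n) ∉
          Finset.univ.filter (fun i : Fin n => j + 1 ≤ (i : ℕ)) := by simp
      have hconsm : (Finset.univ.filter (fun i : Fin n => j ≤ (i : ℕ))).val.map κ =
          κ ⟨j, hjn⟩ ::ₘ (Finset.univ.filter (fun i : Fin n => j + 1 ≤ (i : ℕ))).val.map κ := by
        rw [hsplit, Finset.insert_val_of_notMem hnotmem, Multiset.map_cons]
      have hrec : auxE (k - 1 - j)
            ((Finset.univ.filter (fun i : Fin n => j ≤ (i : ℕ))).val.map κ)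
          = auxE (k - 1 - j)
              ((Finset.univ.filter (fun i : Fin n => j + 1 ≤ (i : ℕ))).val.map κ)
            + κ ⟨j, hjn⟩ * auxE (k - 1 - (j + 1))
              ((Finset.univ.filter (fun i : Fin n => j + 1 ≤ (i : ℕ))).val.map κ) := by
      -- k - 1 - j = (k - 1 - (j+1)) + 1
        have hkk : k - 1 - j = (k - 1 - (j + 1)) + 1 := by omega
        rw [hconsm, hkk, auxE_cons]
      have hfirstpos : 0 < auxE (k - 1 - j)
          ((Finset.univ.filter (fun i : Fin n => j + 1 ≤ (i : ℕ))).val.map κ) := by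
        obtain ⟨hG, _⟩ := auxBlock hk hkn hΓ (j + 1) (by omega)
        exact hG (k - 1 - j) (by omega) (by omega)
      have hκj : 0 < κ ⟨j, hjn⟩ := auxP1 hk hkn hΓ hanti _ (by simp; omega)
      have hE2nn : 0 ≤ auxE (k - 1 - (j + 1))
          ((Finset.univ.filter (fun i : Fin n => j + 1 ≤ (i : ℕ))).val.map κ) := by
        rcases Nat.eq_zero_or_pos (k - 1 - (j + 1)) with h | h
        · rw [h, auxE_zero]; norm_num
        · obtain ⟨hG, _⟩ := auxBlock hk hkn hΓ (j + 1) (by omega)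
          exact (hG _ h (by omega)).le
      have hinner : κ ⟨j, hjn⟩ * auxE (k - 1 - (j + 1))
            ((Finset.univ.filter (fun i : Fin n => j + 1 ≤ (i : ℕ))).val.map κ)
          ≤ auxE (k - 1 - j)
            ((Finset.univ.filter (fun i : Fin n => j ≤ (i : ℕ))).val.map κ) := by
        rw [hrec]; linarith
      have hfsplit : Finset.univ.filter (fun i : Fin n => (i : ℕ) < j + 1) =
          insert ⟨j, hjn⟩ (Finset.univ.filter (fun i : Fin n => (i : ℕ) < j)) := by
        ext i
        simp only [Finset.mem_filter, Finset.mem_insert, Finset.mem_univ, true_and]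
        constructor
        · intro h
          rcases Nat.eq_or_lt_of_le (Nat.lt_succ_iff.1 h) with h' | h'
          · left; exact Fin.ext h'
          · right; omega
        · rintro (rfl | h)
          · simp
          · omega
      have hfnotmem : (⟨j, hjn⟩ : Fin n) ∉
          Finset.univ.filter (fun i : Fin n => (i : ℕ) < j) := by simp
      have hprodpos : 0 ≤ ∏ i ∈ Finset.univ.filter (fun i : Fin n => (i : ℕ) < j), κ i := by
        apply Finset.prod_nonneg
        intro i hi
        simp only [Finset.mem_filter, Finset.mem_univ, true_and] at hi
        exact (auxP1 hk hkn hΓ hanti i (by omega)).le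
      calc (∏ i ∈ Finset.univ.filter (fun i : Fin n => (i : ℕ) < j + 1), κ i) *
            auxE (k - 1 - (j + 1))
              ((Finset.univ.filter (fun i : Fin n => j + 1 ≤ (i : ℕ))).val.map κ)
          = (∏ i ∈ Finset.univ.filter (fun i : Fin n => (i : ℕ) < j), κ i) *
            (κ ⟨j, hjn⟩ * auxE (k - 1 - (j + 1))
              ((Finset.univ.filter (fun i : Fin n => j + 1 ≤ (i : ℕ))).val.map κ)) := by
            rw [hfsplit, Finset.prod_insert hfnotmem]; ring
        _ ≤ (∏ i ∈ Finset.univ.filter (fun i : Fin n => (i : ℕ) < j), κ i) *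
            auxE (k - 1 - j)
              ((Finset.univ.filter (fun i : Fin n => j ≤ (i : ℕ))).val.map κ) :=
            mul_le_mul_of_nonneg_left hinner hprodpos
        _ ≤ _ := hih
  have hfinal := claim (k - 1) le_rfl
  rw [Nat.sub_self, auxE_zero, mul_one] at hfinal
  have huniv : Finset.univ.filter (fun i : Fin n => 0 ≤ (i : ℕ)) = Finset.univ :=
    Finset.filter_true_of_mem (fun i _ => Nat.zero_le _)
  rw [huniv] at hfinal
  rw [esymm_eq_auxE]
  exact hfinal

end FinLevel




theorem esymm2_near_top_bound (n k : ℕ) (hk : 2 ≤ k) (hkn : k ≤ n) :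
    ∃ C : ℝ, 0 < C ∧
      ∀ κ : Fin n → ℝ, κ ∈ GardingCone n k → Antitone κ →
        ∀ p : Fin n, p ≠ ⟨0, by omega⟩ → κ ⟨0, by omega⟩ / 2 ≤ κ p →
          esymm2 n (k - 2) κ ⟨0, by omega⟩ p
              ≤ C * (∏ i ∈ Finset.univ.filter (fun i : Fin n => 1 ≤ (i : ℕ) ∧ (i : ℕ) < k), κ i) / κ p ∧
          (1 ≤ κ ⟨0, by omega⟩ →
            esymm2 n (k - 2) κ ⟨0, by omega⟩ p ≤ 2 * C * esymm n (k - 1) κ) := by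
  have hn2 : 2 ≤ n := le_trans hk hkn
  have hCpos : (0 : ℝ) < 2 ^ n * (n : ℝ) ^ n := by
    apply mul_pos (pow_pos two_pos n)
    apply pow_pos
    exact_mod_cast Nat.pos_of_ne_zero (by omega)
  refine ⟨2 ^ n * (n : ℝ) ^ n, hCpos, ?_⟩
  set C : ℝ := 2 ^ n * (n : ℝ) ^ n with hCdef
  intro κ hΓmem hanti p hpz hp2
  have hΓ : ∀ m, 1 ≤ m → m ≤ k → 0 < esymm n m κ := hΓmem
  set z : Fin n := ⟨0, by omega⟩ with hzdef
  set K : Fin n := ⟨k - 1, by omega⟩ with hKdef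
  have hκK : 0 < κ K := auxP1 hk hkn hΓ hanti K (by simp [hKdef])
  have hκz : 0 < κ z := auxP1 hk hkn hΓ hanti z (by simp [hzdef])
  have hκp : 0 < κ p := lt_of_lt_of_le (by linarith) hp2
  have hp1 : 1 ≤ (p : ℕ) := by
    rcases Nat.eq_zero_or_pos (p : ℕ) with h | h
    · exact absurd (Fin.ext h) hpz
    · exact h
  set S := Finset.univ.filter (fun i : Fin n => 1 ≤ (i : ℕ) ∧ (i : ℕ) < k) with hSdef
  have hScard : S.card = k - 1 := by
    have hattach : S = Finset.attachFin (Finset.Ico 1 k)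
        (fun m hm => by rw [Finset.mem_Ico] at hm; omega) := by
      ext i
      simp [hSdef, Finset.mem_attachFin, Finset.mem_Ico]
    rw [hattach, Finset.card_attachFin, Nat.card_Ico]
  have hSprop : ∀ t ∈ S, 1 ≤ (t : ℕ) ∧ (t : ℕ) < k := by
    intro t ht
    simpa [hSdef] using ht
  have hSpos : ∀ t ∈ S, 0 < κ t := by
    intro t ht
    exact auxP1 hk hkn hΓ hanti t (by have := hSprop t ht; omega)
  have hSgeK : ∀ t ∈ S, κ K ≤ κ t := by
    intro t ht
    apply hanti
    rw [Fin.le_def]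
    have := hSprop t ht
    simp only [hKdef]
    omega
  set q : Fin n := if (p : ℕ) < k then p else K with hqdef
  have hqS : q ∈ S := by
    simp only [hSdef, Finset.mem_filter, Finset.mem_univ, true_and]
    by_cases h : (p : ℕ) < k
    · rw [hqdef, if_pos h]; exact ⟨hp1, h⟩
    · rw [hqdef, if_neg h]; simp only [hKdef]; omega
  have hκpq : κ p ≤ κ q := by
    by_cases h : (p : ℕ) < k
    · rw [hqdef, if_pos h]
    · rw [hqdef, if_neg h]
      apply hanti
      rw [Fin.le_def]
      simp only [hKdef]
      omega
  set T := S.erase q with hTdef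
  have hTcard : T.card = k - 2 := by
    rw [hTdef, Finset.card_erase_of_mem hqS, hScard]
    omega
  have hTsub : T ⊆ S := Finset.erase_subset _ _
  have hTpos : ∀ t ∈ T, 0 < κ t := fun t ht => hSpos t (hTsub ht)
  have hTgeK : ∀ t ∈ T, κ K ≤ κ t := fun t ht => hSgeK t (hTsub ht)
  have hprodT : 0 < ∏ t ∈ T, κ t := Finset.prod_pos hTpos
  set W := ((Finset.univ : Finset (Fin n)).erase z).erase p with hWdef
  -- per-term bound
  have hterm : ∀ s ∈ Finset.powersetCard (k - 2) W,
      ∏ i ∈ s, κ i ≤ (n : ℝ) ^ n * ∏ t ∈ T, κ t := by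
    intro s hs
    rw [Finset.mem_powersetCard] at hs
    obtain ⟨hsW, hscard⟩ := hs
    set s1 := s ∩ T with hs1def
    have hs1s : s1 ⊆ s := Finset.inter_subset_left
    have hs1T : s1 ⊆ T := Finset.inter_subset_right
    have hsdiff : s \ s1 = s \ T := by rw [hs1def, Finset.sdiff_inter_self_left]
    have hprodsplit : (∏ i ∈ s \ T, κ i) * ∏ i ∈ s1, κ i = ∏ i ∈ s, κ i := by
      rw [← hsdiff]; exact Finset.prod_sdiff hs1s
    have hs1pos : 0 < ∏ i ∈ s1, κ i := Finset.prod_pos (fun i hi => hTpos i (hs1T hi))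
    -- indices outside T are ≥ k - 1
    have hbig : ∀ i ∈ s \ T, k - 1 ≤ (i : ℕ) := by
      intro i hi
      rw [Finset.mem_sdiff] at hi
      obtain ⟨his, hiT⟩ := hi
      have hiW := hsW his
      rw [hWdef, Finset.mem_erase] at hiW
      obtain ⟨hip, hiz⟩ := hiW
      rw [Finset.mem_erase] at hiz
      have hiz0 : (i : ℕ) ≠ 0 := fun h => hiz.1 (Fin.ext h)
      by_cases h : (i : ℕ) < k
      · have hiS : i ∈ S := by
          simp only [hSdef, Finset.mem_filter, Finset.mem_univ, true_and]
          omega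
        have hiq : i = q := by
          by_contra hne
          exact hiT (Finset.mem_erase.2 ⟨hne, hiS⟩)
        by_cases h2 : (p : ℕ) < k
        · exfalso
          apply hip
          rw [hiq, hqdef, if_pos h2]
        · have : (i : ℕ) = k - 1 := by rw [hiq, hqdef, if_neg h2, hKdef]
          omega
      · omega
    have habs : ∀ i ∈ s \ T, |κ i| ≤ (n : ℝ) * κ K := by
      intro i hi
      have := auxP2 hk hkn hΓ hanti i (hbig i hi)
      simpa [hKdef] using this
    set c2 := (s \ T).card with hc2def
    have hstep1 : ∏ i ∈ s, κ i ≤ (∏ i ∈ s \ T, |κ i|) * ∏ i ∈ s1, κ i := by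
      rw [← hprodsplit]
      apply mul_le_mul_of_nonneg_right _ hs1pos.le
      calc ∏ i ∈ s \ T, κ i ≤ |∏ i ∈ s \ T, κ i| := le_abs_self _
        _ = ∏ i ∈ s \ T, |κ i| := Finset.abs_prod _ _
    have hstep2 : ∏ i ∈ s \ T, |κ i| ≤ ((n : ℝ) * κ K) ^ c2 := by
      rw [hc2def, ← Finset.prod_const]
      exact Finset.prod_le_prod (fun i _ => abs_nonneg _) habs
    have hcardeq : (T \ s1).card = c2 := by
      have h1 : (T \ s1).card = T.card - s1.card := Finset.card_sdiff_of_subset hs1T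
      have h2 : (s \ T).card = s.card - s1.card := by
        rw [← hsdiff]; exact Finset.card_sdiff_of_subset hs1s
      rw [hc2def, h1, h2, hTcard, hscard]
    have hstep4 : (κ K) ^ c2 ≤ ∏ i ∈ T \ s1, κ i := by
      rw [← hcardeq, ← Finset.prod_const]
      exact Finset.prod_le_prod (fun _ _ => hκK.le)
        (fun i hi => hTgeK i (Finset.mem_sdiff.1 hi).1)
    have hTsplit : (∏ i ∈ T \ s1, κ i) * ∏ i ∈ s1, κ i = ∏ i ∈ T, κ i :=
      Finset.prod_sdiff hs1T
    have hc2len : c2 ≤ n := by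
      have h1 : (s \ T).card ≤ s.card := Finset.card_le_card Finset.sdiff_subset
      have h2 : s.card ≤ n := by
        rw [hscard]; omega
      omega
    have hn1 : (1 : ℝ) ≤ (n : ℝ) := by exact_mod_cast (by omega : 1 ≤ n)
    calc ∏ i ∈ s, κ i ≤ (∏ i ∈ s \ T, |κ i|) * ∏ i ∈ s1, κ i := hstep1
      _ ≤ ((n : ℝ) * κ K) ^ c2 * ∏ i ∈ s1, κ i := by
          exact mul_le_mul_of_nonneg_right hstep2 hs1pos.le
      _ = (n : ℝ) ^ c2 * ((κ K) ^ c2 * ∏ i ∈ s1, κ i) := by rw [mul_pow]; ring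
      _ ≤ (n : ℝ) ^ c2 * ((∏ i ∈ T \ s1, κ i) * ∏ i ∈ s1, κ i) := by
          apply mul_le_mul_of_nonneg_left _ (by positivity)
          exact mul_le_mul_of_nonneg_right hstep4 hs1pos.le
      _ = (n : ℝ) ^ c2 * ∏ i ∈ T, κ i := by rw [hTsplit]
      _ ≤ (n : ℝ) ^ n * ∏ i ∈ T, κ i := by
          exact mul_le_mul_of_nonneg_right (pow_le_pow_right₀ hn1 hc2len) hprodT.le
  -- sum the term bounds
  have hsumbound : esymm2 n (k - 2) κ z p ≤ C * ∏ t ∈ T, κ t := by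
    have h1 : esymm2 n (k - 2) κ z p ≤
        (Finset.powersetCard (k - 2) W).card • ((n : ℝ) ^ n * ∏ t ∈ T, κ t) :=
      Finset.sum_le_card_nsmul _ _ _ hterm
    rw [nsmul_eq_mul] at h1
    have hcardle : ((Finset.powersetCard (k - 2) W).card : ℝ) ≤ 2 ^ n := by
      have h2 : (Finset.powersetCard (k - 2) W).card ≤ W.powerset.card :=
        Finset.card_le_card (fun u hu => Finset.mem_powerset.2 (Finset.mem_powersetCard.1 hu).1)
      rw [Finset.card_powerset] at h2
      have h3 : W.card ≤ n := le_trans (Finset.card_le_univ _) (by simp)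
      have h4 : (2 : ℕ) ^ W.card ≤ 2 ^ n := Nat.pow_le_pow_right (by omega) h3
      have : (Finset.powersetCard (k - 2) W).card ≤ 2 ^ n := le_trans h2 h4
      exact_mod_cast this
    have hnn : (0 : ℝ) ≤ (n : ℝ) ^ n * ∏ t ∈ T, κ t := by positivity
    calc esymm2 n (k - 2) κ z p
        ≤ ((Finset.powersetCard (k - 2) W).card : ℝ) * ((n : ℝ) ^ n * ∏ t ∈ T, κ t) := h1
      _ ≤ 2 ^ n * ((n : ℝ) ^ n * ∏ t ∈ T, κ t) := mul_le_mul_of_nonneg_right hcardle hnn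
      _ = C * ∏ t ∈ T, κ t := by rw [hCdef]; ring
  have hprodS : ∏ i ∈ S, κ i = κ q * ∏ t ∈ T, κ t := (Finset.mul_prod_erase S κ hqS).symm
  have hTle : ∏ t ∈ T, κ t ≤ (∏ i ∈ S, κ i) / κ p := by
    rw [le_div_iff₀ hκp, hprodS]
    calc (∏ t ∈ T, κ t) * κ p ≤ (∏ t ∈ T, κ t) * κ q :=
          mul_le_mul_of_nonneg_left hκpq hprodT.le
      _ = κ q * ∏ t ∈ T, κ t := mul_comm _ _
  have hpartA : esymm2 n (k - 2) κ z p ≤ C * (∏ i ∈ S, κ i) / κ p := by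
    rw [mul_div_assoc]
    calc esymm2 n (k - 2) κ z p ≤ C * ∏ t ∈ T, κ t := hsumbound
      _ ≤ C * ((∏ i ∈ S, κ i) / κ p) := mul_le_mul_of_nonneg_left hTle hCpos.le
  refine ⟨hpartA, ?_⟩
  intro h1κ
  have hKS : K ∈ S := by
    simp only [hSdef, Finset.mem_filter, Finset.mem_univ, true_and, hKdef]
    omega
  have hprodSK : ∏ i ∈ S, κ i = κ K * ∏ i ∈ S.erase K, κ i := (Finset.mul_prod_erase S κ hKS).symm
  have hSKpos : 0 < ∏ i ∈ S.erase K, κ i :=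
    Finset.prod_pos (fun i hi => hSpos i (Finset.erase_subset _ _ hi))
  have hSpos' : 0 < ∏ i ∈ S, κ i := Finset.prod_pos hSpos
  have hins : Finset.univ.filter (fun i : Fin n => (i : ℕ) < k - 1) = insert z (S.erase K) := by
    ext i
    simp only [Finset.mem_filter, Finset.mem_insert, Finset.mem_erase, Finset.mem_univ, true_and,
      hSdef]
    constructor
    · intro h
      by_cases h0 : (i : ℕ) = 0
      · left; exact Fin.ext h0
      · right
        refine ⟨fun he => ?_, by omega, by omega⟩
        have hik : (i : ℕ) = k - 1 := by rw [he, hKdef]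
        omega
    · rintro (rfl | ⟨hne, h1, h2⟩)
      · simp only [hzdef]; omega
      · have : (i : ℕ) ≠ k - 1 := fun h => hne (Fin.ext (by simp only [hKdef]; omega))
        omega
  have hznot : z ∉ S.erase K := by
    intro h
    have := hSprop z (Finset.erase_subset _ _ h)
    simp only [hzdef] at this
    omega
  have hfiltprod : ∏ i ∈ Finset.univ.filter (fun i : Fin n => (i : ℕ) < k - 1), κ i =
      κ z * ∏ i ∈ S.erase K, κ i := by
    rw [hins, Finset.prod_insert hznot]
  have hκKz : κ K ≤ κ z := hanti (by rw [Fin.le_def]; simp [hzdef, hKdef])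
  have hSle : ∏ i ∈ S, κ i ≤ esymm n (k - 1) κ := by
    calc ∏ i ∈ S, κ i = κ K * ∏ i ∈ S.erase K, κ i := hprodSK
      _ ≤ κ z * ∏ i ∈ S.erase K, κ i := mul_le_mul_of_nonneg_right hκKz hSKpos.le
      _ = ∏ i ∈ Finset.univ.filter (fun i : Fin n => (i : ℕ) < k - 1), κ i := hfiltprod.symm
      _ ≤ esymm n (k - 1) κ := auxProdLB hk hkn hΓ hanti
  have hmid : C * (∏ i ∈ S, κ i) / κ p ≤ 2 * C * ∏ i ∈ S, κ i := by
    rw [div_le_iff₀ hκp]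
    have h2p : 1 ≤ 2 * κ p := by linarith
    nlinarith [mul_pos hCpos hSpos']
  calc esymm2 n (k - 2) κ z p ≤ C * (∏ i ∈ S, κ i) / κ p := hpartA
    _ ≤ 2 * C * ∏ i ∈ S, κ i := hmid
    _ ≤ 2 * C * esymm n (k - 1) κ := by
        apply mul_le_mul_of_nonneg_left hSle
        positivity
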